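/- Let S be a measurable space, δ a real discount factor with 0 < δ < 1, κ a Markov kernel from S to S, and u : S → ℝ a bounded measurable function. If f : S → ℝ is any bounded measurable function satisfying f(s) = (1 − δ)·u(s) + δ·∫ f(s′) ∂(κ s) for all s ∈ S, then f equals the state value function g defined as the expected discounted sum g(s) = ∫ (∑_{t=0}^∞ δ^t·(1 − δ)·u(ω(t))) ∂P_s along trajectories of the Markov chain started at s. In other words, the state value function is uniquely determined by the Bellman recursion. -/

import Mathlib

open MeasureTheory ProbabilityTheory

/-- Prepending an initial state to a trajectory. -/
def prepend {S : Type*} (s : S) (ω : ℕ → S) : ℕ → S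
  | 0 => s
  | n + 1 => ω n

lemma measurable_prepend {S : Type*} [MeasurableSpace S] (s : S) :
    Measurable (prepend s) := by
  apply measurable_pi_lambda
  intro n
  match n with
  | 0 => exact measurable_const
  | n + 1 => exact measurable_pi_apply n

/-- Bochner integral over a bind of probability measures, for bounded measurable integrands. -/
lemma integral_bind_of_bounded {α β : Type*} [MeasurableSpace α] [MeasurableSpace β]
    (μ : Measure α) [IsProbabilityMeasure μ] (m : α → Measure β) (hm : Measurable m)
    (hprob : ∀ a, IsProbabilityMeasure (m a)) {F : β → ℝ} (hF : Measurable F)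
    {C : ℝ} (hC : ∀ b, |F b| ≤ C) :
    ∫ b, F b ∂(μ.bind m) = ∫ a, ∫ b, F b ∂(m a) ∂μ := by
  let K : Kernel α β := ⟨m, hm⟩
  have hK : ∀ a, K a = m a := fun a => rfl
  have : IsMarkovKernel K := ⟨fun a => hprob a⟩
  have hbind : μ.bind m = (μ ⊗ₘ K).map Prod.snd := by
    ext t ht
    rw [Measure.map_apply measurable_snd ht, Measure.compProd_apply (measurable_snd ht),
      Measure.bind_apply ht hm.aemeasurable]
    exact (lintegral_congr fun a => rfl).symm
  have hint : Integrable (fun z : α × β => F z.2) (μ ⊗ₘ K) := by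
    refine (integrable_const C).mono' (hF.comp measurable_snd).aestronglyMeasurable ?_
    exact Filter.Eventually.of_forall fun z => by simpa [Real.norm_eq_abs] using hC z.2
  rw [hbind, integral_map measurable_snd.aemeasurable hF.aestronglyMeasurable,
    Measure.integral_compProd hint]
  simp [hK]

/-- Any bounded measurable solution `f` of the Bellman recursion
`f s = (1 - δ) * u s + δ * ∫ f ∂(κ s)` equals the state value function
`g s = ∫ (∑' t, δ ^ t * (1 - δ) * u (ω t)) ∂(P s)`, where `P s` is the Ionescu–Tulcea
trajectory measure of the Markov chain with kernel `κ` started at `s` (characterized as a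
Markov kernel satisfying the one-step disintegration
`P s = (κ s).bind (fun s₁ => (P s₁).map (prepend s))`). -/
theorem bellman_solution_eq_state_value_function
    {S : Type*} [MeasurableSpace S] (δ : ℝ) (hδ0 : 0 < δ) (hδ1 : δ < 1)
    (κ : Kernel S S) [IsMarkovKernel κ]
    (u : S → ℝ) (hu_meas : Measurable u) (hu_bd : ∃ C, ∀ s, |u s| ≤ C)
    (P : S → Measure (ℕ → S)) (hP_meas : Measurable P)
    (hP_prob : ∀ s, IsProbabilityMeasure (P s))
    (hP_rec : ∀ s, P s = (κ s).bind fun s₁ => (P s₁).map (prepend s))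
    (f : S → ℝ) (hf_meas : Measurable f) (hf_bd : ∃ C, ∀ s, |f s| ≤ C)
    (hf_bellman : ∀ s, f s = (1 - δ) * u s + δ * ∫ s', f s' ∂(κ s)) :
    ∀ s, f s = ∫ ω, (∑' t : ℕ, δ ^ t * (1 - δ) * u (ω t)) ∂(P s) := by
  obtain ⟨Cu₀, hCu₀⟩ := hu_bd
  obtain ⟨Cf₀, hCf₀⟩ := hf_bd
  set Cu : ℝ := max Cu₀ 0 with hCu_def
  have hCu : ∀ s, |u s| ≤ Cu := fun s => (hCu₀ s).trans (le_max_left _ _)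
  have hCu0 : 0 ≤ Cu := le_max_right _ _
  set Cf : ℝ := max Cf₀ 0 with hCf_def
  have hCf : ∀ s, |f s| ≤ Cf := fun s => (hCf₀ s).trans (le_max_left _ _)
  have h1δ : 0 < 1 - δ := by linarith
  set F : (ℕ → S) → ℝ := fun ω => ∑' t : ℕ, δ ^ t * (1 - δ) * u (ω t) with hF_def
  -- summability and bounds
  have hterm_bd : ∀ (ω : ℕ → S) (t : ℕ), ‖δ ^ t * (1 - δ) * u (ω t)‖ ≤ δ ^ t * ((1 - δ) * Cu) := by
    intro ω t
    have h1 : (0:ℝ) ≤ δ ^ t := pow_nonneg hδ0.le t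
    rw [Real.norm_eq_abs, abs_mul, abs_mul, abs_of_nonneg h1, abs_of_nonneg h1δ.le, mul_assoc]
    exact mul_le_mul_of_nonneg_left (mul_le_mul_of_nonneg_left (hCu _) h1δ.le) h1
  have hgeo : Summable (fun t : ℕ => δ ^ t * ((1 - δ) * Cu)) :=
    (summable_geometric_of_lt_one hδ0.le hδ1).mul_right _
  have hsum : ∀ ω : ℕ → S, Summable (fun t : ℕ => δ ^ t * (1 - δ) * u (ω t)) := fun ω =>
    Summable.of_norm_bounded hgeo (hterm_bd ω)
  have hFbd : ∀ ω, |F ω| ≤ Cu := by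
    intro ω
    have h1 : |F ω| ≤ ∑' t : ℕ, δ ^ t * ((1 - δ) * Cu) := by
      rw [← Real.norm_eq_abs]
      exact norm_tsum_le_tsum_norm ((hsum ω).norm.of_nonneg_of_le (fun t => norm_nonneg _)
        (fun t => le_rfl)) |>.trans (Summable.tsum_le_tsum (hterm_bd ω) (hsum ω).norm hgeo)
    have h2 : ∑' t : ℕ, δ ^ t * ((1 - δ) * Cu) = Cu := by
      rw [tsum_mul_right, tsum_geometric_of_lt_one hδ0.le hδ1]
      field_simp
    linarith [h1, h2.le]
  have hFmeas : Measurable F := by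
    apply measurable_of_tendsto_metrizable
      (f := fun n ω => ∑ t ∈ Finset.range n, δ ^ t * (1 - δ) * u (ω t))
    · intro n
      exact Finset.measurable_sum _ fun t _ =>
        (measurable_const.mul ((hu_meas.comp (measurable_pi_apply t))))
    · rw [tendsto_pi_nhds]
      intro ω
      exact (hsum ω).hasSum.tendsto_sum_nat
  -- the recursion for F under prepend
  have hFprep : ∀ (s : S) (ω : ℕ → S), F (prepend s ω) = (1 - δ) * u s + δ * F ω := by
    intro s ω
    have := Summable.tsum_eq_zero_add (f := fun t : ℕ => δ ^ t * (1 - δ) * u (prepend s ω t))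
      (hsum (prepend s ω))
    show (∑' t : ℕ, δ ^ t * (1 - δ) * u (prepend s ω t))
        = (1 - δ) * u s + δ * ∑' t : ℕ, δ ^ t * (1 - δ) * u (ω t)
    rw [this]
    have h0 : δ ^ 0 * (1 - δ) * u (prepend s ω 0) = (1 - δ) * u s := by
      simp [prepend]
    have h1 : ∀ t : ℕ, δ ^ (t + 1) * (1 - δ) * u (prepend s ω (t + 1))
        = δ * (δ ^ t * (1 - δ) * u (ω t)) := by
      intro t; simp [prepend, pow_succ]; ring
    rw [h0]
    congr 1
    simp_rw [h1]
    rw [tsum_mul_left]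
  -- integrability of F against any probability measure
  have hFint : ∀ (μ : Measure (ℕ → S)), IsProbabilityMeasure μ → Integrable F μ := by
    intro μ hμ
    exact (integrable_const Cu).mono' hFmeas.aestronglyMeasurable
      (Filter.Eventually.of_forall fun ω => by simpa [Real.norm_eq_abs] using hFbd ω)
  set g : S → ℝ := fun s => ∫ ω, F ω ∂(P s) with hg_def
  -- measurability of g
  have hg_meas : Measurable g := by
    let K : Kernel S (ℕ → S) := ⟨P, hP_meas⟩
    have : IsMarkovKernel K := ⟨fun s => hP_prob s⟩
    have h : StronglyMeasurable fun p : S × (ℕ → S) => F p.2 :=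
      (hFmeas.comp measurable_snd).stronglyMeasurable
    exact (h.integral_kernel_prod_right' (κ := K)).measurable
  have hg_bd : ∀ s, |g s| ≤ Cu := by
    intro s
    have := hP_prob s
    rw [← Real.norm_eq_abs]
    calc ‖g s‖ ≤ Cu * ((P s) Set.univ).toReal :=
          norm_integral_le_of_norm_le_const
            (Filter.Eventually.of_forall fun ω => by simpa [Real.norm_eq_abs] using hFbd ω)
      _ = Cu := by simp
  -- g satisfies the Bellman recursion
  have hg_bellman : ∀ s, g s = (1 - δ) * u s + δ * ∫ s', g s' ∂(κ s) := by
    intro s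
    have hmm : Measurable fun s₁ => (P s₁).map (prepend s) :=
      (Measure.measurable_map _ (measurable_prepend s)).comp hP_meas
    have hmp : ∀ s₁, IsProbabilityMeasure ((P s₁).map (prepend s)) := fun s₁ =>
      Measure.isProbabilityMeasure_map (μ := P s₁) (measurable_prepend s).aemeasurable
    have h1 : g s = ∫ s₁, ∫ ω, F ω ∂((P s₁).map (prepend s)) ∂(κ s) := by
      rw [hg_def]
      simp only
      rw [hP_rec s]
      exact integral_bind_of_bounded (κ s) _ hmm hmp hFmeas hFbd
    have h2 : ∀ s₁, ∫ ω, F ω ∂((P s₁).map (prepend s)) = (1 - δ) * u s + δ * g s₁ := by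
      intro s₁
      rw [integral_map (measurable_prepend s).aemeasurable hFmeas.aestronglyMeasurable]
      simp_rw [hFprep s]
      have := hP_prob s₁
      rw [integral_add (integrable_const _)
        (((hFint _ (hP_prob s₁)).const_mul δ)), integral_const, integral_const_mul]
      simp [hg_def]
    rw [h1]
    simp_rw [h2]
    have hgint : Integrable g (κ s) :=
      (integrable_const Cu).mono' hg_meas.aestronglyMeasurable
        (Filter.Eventually.of_forall fun s' => by simpa [Real.norm_eq_abs] using hg_bd s')
    rw [integral_add (integrable_const _) (hgint.const_mul δ), integral_const,
      integral_const_mul]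
    simp
  -- uniqueness via contraction
  set h : S → ℝ := fun s => f s - g s with hh_def
  have hh_meas : Measurable h := hf_meas.sub hg_meas
  set D : ℝ := Cf + Cu with hD_def
  have hh_bd : ∀ s, |h s| ≤ D := fun s =>
    (abs_sub (f s) (g s)).trans (add_le_add (hCf s) (hg_bd s))
  have hh_int : ∀ s, Integrable h (κ s) := fun s =>
    (integrable_const D).mono' hh_meas.aestronglyMeasurable
      (Filter.Eventually.of_forall fun s' => by simpa [Real.norm_eq_abs] using hh_bd s')
  have hf_int : ∀ s, Integrable f (κ s) := fun s =>
    (integrable_const Cf).mono' hf_meas.aestronglyMeasurable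
      (Filter.Eventually.of_forall fun s' => by simpa [Real.norm_eq_abs] using hCf s')
  have hg_int : ∀ s, Integrable g (κ s) := fun s =>
    (integrable_const Cu).mono' hg_meas.aestronglyMeasurable
      (Filter.Eventually.of_forall fun s' => by simpa [Real.norm_eq_abs] using hg_bd s')
  have hh_rec : ∀ s, h s = δ * ∫ s', h s' ∂(κ s) := by
    intro s
    rw [hh_def]
    simp only
    rw [hf_bellman s, hg_bellman s]
    rw [integral_sub (hf_int s) (hg_int s)]
    ring
  have key : ∀ (n : ℕ) (s : S), |h s| ≤ δ ^ n * D := by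
    intro n
    induction n with
    | zero => intro s; simpa using hh_bd s
    | succ n ih =>
      intro s
      have h1 : |∫ s', h s' ∂(κ s)| ≤ δ ^ n * D := by
        rw [← Real.norm_eq_abs]
        calc ‖∫ s', h s' ∂(κ s)‖ ≤ (δ ^ n * D) * ((κ s) Set.univ).toReal :=
              norm_integral_le_of_norm_le_const
                (Filter.Eventually.of_forall fun s' => by
                  simpa [Real.norm_eq_abs] using ih s')
          _ = δ ^ n * D := by simp
      rw [hh_rec s, abs_mul, abs_of_nonneg hδ0.le, pow_succ]
      calc δ * |∫ s', h s' ∂(κ s)| ≤ δ * (δ ^ n * D) :=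
            mul_le_mul_of_nonneg_left h1 hδ0.le
        _ = δ ^ n * δ * D := by ring
  intro s
  have hzero : h s = 0 := by
    have htend : Filter.Tendsto (fun n : ℕ => δ ^ n * D) Filter.atTop (nhds 0) := by
      simpa using (tendsto_pow_atTop_nhds_zero_of_lt_one hδ0.le hδ1).mul_const D
    have : |h s| ≤ 0 := ge_of_tendsto htend (Filter.Eventually.of_forall fun n => key n s)
    exact abs_eq_zero.mp (le_antisymm this (abs_nonneg _))
  have := sub_eq_zero.mp hzero
  exact this
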